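/- arXiv:1001.5098 — 2 statements merged into one kernel-verified Lean document; each statement's English description precedes it below -/
import Mathlib

section
/- For a Blaschke product $B(z) = \prod_{n=1}^{\infty} \frac{\bar{a}_n}{|a_n|}\frac{a_n - z}{1 - \bar{a}_n z}$ with zeros $\{a_n\}$, the identity $\frac{1 - |B(z)|^2}{1 - |z|^2} = \sum_n |B_n(z)|^2 \frac{1 - |a_n|^2}{|1 - \bar{a}_n z|^2}$ holds for all $z$ in the open unit disc, where $B_n(z) = \prod_{j=1}^{n-1} \frac{\bar{a}_j}{|a_j|}\frac{a_j - z}{1 - \bar{a}_j z}$ is the partial product (with $B_1 \equiv 1$). -/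
open Complex Finset

lemma blaschke_normSq_identity (a z : ℂ) :
    ‖1 - (starRingEnd ℂ) a * z‖^2 - ‖a - z‖^2 = (1 - ‖a‖^2) * (1 - ‖z‖^2) := by
  rw [Complex.sq_norm, Complex.sq_norm, Complex.sq_norm, Complex.sq_norm]
  simp [Complex.normSq_apply, Complex.sub_re, Complex.sub_im, Complex.mul_re, Complex.mul_im]
  ring

lemma blaschke_factor_sub (a z : ℂ) (ha : a ≠ 0) (hd : 1 - (starRingEnd ℂ) a * z ≠ 0) :
    1 - ((starRingEnd ℂ) a / (‖a‖ : ℂ)) * ((a - z) / (1 - (starRingEnd ℂ) a * z))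
      = (1 - (‖a‖:ℂ)) * ((‖a‖:ℂ) + (starRingEnd ℂ) a * z)
        / ((‖a‖:ℂ) * (1 - (starRingEnd ℂ) a * z)) := by
  have hr : (‖a‖ : ℂ) ≠ 0 := by simpa using norm_ne_zero_iff.mpr ha
  have h2 : (‖a‖:ℂ) * (1 - (starRingEnd ℂ) a * z) ≠ 0 := mul_ne_zero hr hd
  have key : (starRingEnd ℂ) a * a = (‖a‖:ℂ)^2 := by rw [mul_comm]; exact Complex.mul_conj' a
  rw [div_mul_div_comm, eq_div_iff h2, sub_mul, div_mul_cancel₀ _ h2]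
  linear_combination -key

lemma hasProd_of_factor_zero {f : ℕ → ℂ} (k : ℕ) (h : f k = 0) : HasProd f 0 := by
  have h0 : ∀ᶠ s in Filter.atTop, ∏ i ∈ s, f i = 0 := by
    filter_upwards [Filter.eventually_ge_atTop {k}] with s hs
    exact Finset.prod_eq_zero (hs (Finset.mem_singleton_self k)) h
  exact Filter.Tendsto.congr' (Filter.EventuallyEq.symm h0) tendsto_const_nhds

/-- The Ahern–Clark identity: for a Blaschke product `B` with zeros `a n`,
`(1 - |B z|²)/(1 - |z|²) = ∑ₙ |Bₙ z|² (1 - |aₙ|²)/|1 - conj(aₙ) z|²`,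
where `Bₙ` is the partial product of the first `n` factors (`B₀ ≡ 1`). -/
theorem blaschke_identity
    (a : ℕ → ℂ) (ha : ∀ n, 0 < ‖a n‖ ∧ ‖a n‖ < 1)
    (hsum : Summable fun n => 1 - ‖a n‖)
    (B : ℂ → ℂ)
    (hB : ∀ z, B z = ∏' n, ((starRingEnd ℂ) (a n) / (‖a n‖ : ℂ)) *
        ((a n - z) / (1 - (starRingEnd ℂ) (a n) * z)))
    (Bp : ℕ → ℂ → ℂ)
    (hBp : ∀ n z, Bp n z = ∏ j ∈ Finset.range n,
        ((starRingEnd ℂ) (a j) / (‖a j‖ : ℂ)) *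
        ((a j - z) / (1 - (starRingEnd ℂ) (a j) * z)))
    (z : ℂ) (hz : ‖z‖ < 1) :
    (1 - ‖B z‖ ^ 2) / (1 - ‖z‖ ^ 2)
      = ∑' n, ‖Bp n z‖ ^ 2 *
          ((1 - ‖a n‖ ^ 2) / ‖1 - (starRingEnd ℂ) (a n) * z‖ ^ 2) := by
  set f : ℕ → ℂ := fun n => ((starRingEnd ℂ) (a n) / (‖a n‖ : ℂ)) *
      ((a n - z) / (1 - (starRingEnd ℂ) (a n) * z)) with hf
  set t : ℕ → ℝ := fun n => ‖Bp n z‖ ^ 2 *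
      ((1 - ‖a n‖ ^ 2) / ‖1 - (starRingEnd ℂ) (a n) * z‖ ^ 2) with ht
  have hane : ∀ n, a n ≠ 0 := fun n => norm_pos_iff.mp (ha n).1
  have hz1 : (0:ℝ) < 1 - ‖z‖ := by linarith
  have hz2 : (0:ℝ) < 1 - ‖z‖^2 := by nlinarith [norm_nonneg z]
  -- the denominators
  have hwlt : ∀ n, ‖(starRingEnd ℂ) (a n) * z‖ < 1 := by
    intro n
    rw [norm_mul, RCLike.norm_conj]
    nlinarith [(ha n).1, (ha n).2, norm_nonneg z, norm_nonneg (a n)]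
  have hdne : ∀ n, 1 - (starRingEnd ℂ) (a n) * z ≠ 0 := by
    intro n h
    rw [sub_eq_zero] at h
    have := hwlt n
    rw [← h] at this
    simp at this
  have hdge : ∀ n, 1 - ‖z‖ ≤ ‖1 - (starRingEnd ℂ) (a n) * z‖ := by
    intro n
    have h1 : ‖(1:ℂ)‖ - ‖(starRingEnd ℂ) (a n) * z‖ ≤ ‖1 - (starRingEnd ℂ) (a n) * z‖ :=
      norm_sub_norm_le _ _
    have h2 : ‖(starRingEnd ℂ) (a n) * z‖ ≤ ‖z‖ := by
      rw [norm_mul, RCLike.norm_conj]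
      nlinarith [(ha n).2, norm_nonneg z]
    simp only [norm_one] at h1
    linarith
  have hdpos : ∀ n, (0:ℝ) < ‖1 - (starRingEnd ℂ) (a n) * z‖ := fun n => lt_of_lt_of_le hz1 (hdge n)
  -- norm of each factor
  have hfnorm : ∀ n, ‖f n‖ = ‖a n - z‖ / ‖1 - (starRingEnd ℂ) (a n) * z‖ := by
    intro n
    rw [hf]
    simp only [norm_mul, norm_div, RCLike.norm_conj, Complex.norm_real, Real.norm_eq_abs]
    rw [_root_.abs_of_nonneg (norm_nonneg (a n)), div_self (ne_of_gt (ha n).1), one_mul]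
  -- key factor identity
  have key1 : ∀ n, 1 - ‖f n‖^2
      = (1 - ‖a n‖^2) * (1 - ‖z‖^2) / ‖1 - (starRingEnd ℂ) (a n) * z‖^2 := by
    intro n
    have hD : ‖1 - (starRingEnd ℂ) (a n) * z‖^2 ≠ 0 := pow_ne_zero 2 (ne_of_gt (hdpos n))
    rw [hfnorm n, div_pow, eq_div_iff hD, sub_mul, div_mul_cancel₀ _ hD, one_mul,
      blaschke_normSq_identity]
  -- telescoping step
  have hBpsucc : ∀ n, ‖Bp (n+1) z‖^2 = ‖Bp n z‖^2 * ‖f n‖^2 := by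
    intro n
    rw [hBp, hBp, Finset.prod_range_succ, norm_mul, mul_pow]
  have step : ∀ n, ‖Bp n z‖^2 - ‖Bp (n+1) z‖^2 = (1 - ‖z‖^2) * t n := by
    intro n
    rw [hBpsucc n, ht]
    have := key1 n
    have h3 : ‖f n‖^2 = 1 - (1 - ‖a n‖^2) * (1 - ‖z‖^2) / ‖1 - (starRingEnd ℂ) (a n) * z‖^2 := by
      linarith
    rw [h3]
    field_simp
    ring
  have hBp0 : ‖Bp 0 z‖^2 = 1 := by rw [hBp]; simp
  have partial_sum : ∀ N, ∑ n ∈ Finset.range N, t n = (1 - ‖Bp N z‖^2) / (1 - ‖z‖^2) := by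
    intro N
    have h4 : ∑ n ∈ Finset.range N, (‖Bp n z‖^2 - ‖Bp (n+1) z‖^2) = ‖Bp 0 z‖^2 - ‖Bp N z‖^2 :=
      Finset.sum_range_sub' (fun n => ‖Bp n z‖^2) N
    rw [eq_div_iff (ne_of_gt hz2), Finset.sum_mul]
    have h5 : ∀ n ∈ Finset.range N, t n * (1 - ‖z‖^2) = ‖Bp n z‖^2 - ‖Bp (n+1) z‖^2 := by
      intro n _
      rw [mul_comm]
      exact (step n).symm
    rw [Finset.sum_congr rfl h5, h4, hBp0]
  -- nonnegativity of terms
  have htnonneg : ∀ n, 0 ≤ t n := by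
    intro n
    apply mul_nonneg (by positivity)
    apply div_nonneg _ (by positivity)
    nlinarith [(ha n).2, norm_nonneg (a n)]
  -- HasProd f (B z)
  have hprod : HasProd f (B z) := by
    by_cases hez : ∃ k, f k = 0
    · obtain ⟨k, hk⟩ := hez
      have h0 : HasProd f 0 := hasProd_of_factor_zero k hk
      rw [hB z, ← hf, h0.tprod_eq]
      exact h0
    · push_neg at hez
      -- multipliable via summable log
      have hlog : Summable fun n => Complex.log (f n) := by
        -- choose N beyond which the bound works
        have htend : Filter.Tendsto (fun n => 1 - ‖a n‖) Filter.atTop (nhds 0) :=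
          hsum.tendsto_atTop_zero
        have hev : ∀ᶠ n in Filter.atTop, 1 - ‖a n‖ < (1 - ‖z‖) / 16 ∧ 1 - ‖a n‖ < 1/2 := by
          have h1 := htend.eventually (eventually_lt_nhds (show (0:ℝ) < (1 - ‖z‖)/16 by positivity))
          have h2 := htend.eventually (eventually_lt_nhds (show (0:ℝ) < 1/2 by norm_num))
          filter_upwards [h1, h2] with n hn1 hn2 using ⟨hn1, hn2⟩
        apply Summable.of_norm_bounded_eventually_nat (g := fun n => 6 / (1 - ‖z‖) * (1 - ‖a n‖))
          (hsum.mul_left _)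
        filter_upwards [hev] with n hn
        obtain ⟨hn1, hn2⟩ := hn
        have hahalf : (1:ℝ)/2 ≤ ‖a n‖ := by linarith
        -- bound ‖1 - f n‖
        have hsub : ‖1 - f n‖ ≤ 4 / (1 - ‖z‖) * (1 - ‖a n‖) := by
          rw [hf]
          rw [blaschke_factor_sub (a n) z (hane n) (hdne n)]
          rw [norm_div, norm_mul]
          have hnum1 : ‖(1:ℂ) - (‖a n‖:ℂ)‖ = 1 - ‖a n‖ := by
            rw [show (1:ℂ) - (‖a n‖:ℂ) = ((1 - ‖a n‖ : ℝ) : ℂ) by push_cast; ring,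
              Complex.norm_real, Real.norm_eq_abs,
              _root_.abs_of_nonneg (by linarith [(ha n).2] : (0:ℝ) ≤ 1 - ‖a n‖)]
          have hnum2 : ‖(‖a n‖:ℂ) + (starRingEnd ℂ) (a n) * z‖ ≤ 2 := by
            calc ‖(‖a n‖:ℂ) + (starRingEnd ℂ) (a n) * z‖
                ≤ ‖(‖a n‖:ℂ)‖ + ‖(starRingEnd ℂ) (a n) * z‖ := norm_add_le _ _
              _ ≤ 1 + 1 := by
                  gcongr
                  · rw [Complex.norm_real, Real.norm_eq_abs,
                      _root_.abs_of_nonneg (norm_nonneg _)]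
                    linarith [(ha n).2]
                  · linarith [hwlt n]
              _ = 2 := by norm_num
          have hden : (1:ℝ)/2 * (1 - ‖z‖) ≤ ‖(‖a n‖:ℂ) * (1 - (starRingEnd ℂ) (a n) * z)‖ := by
            rw [norm_mul, Complex.norm_real, Real.norm_eq_abs,
              _root_.abs_of_nonneg (norm_nonneg _)]
            exact mul_le_mul hahalf (hdge n) (le_of_lt hz1) (norm_nonneg _)
          rw [hnum1]
          calc (1 - ‖a n‖) * ‖(‖a n‖:ℂ) + (starRingEnd ℂ) (a n) * z‖
                / ‖(‖a n‖:ℂ) * (1 - (starRingEnd ℂ) (a n) * z)‖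
              ≤ (1 - ‖a n‖) * 2 / (1/2 * (1 - ‖z‖)) :=
                div_le_div₀ (by nlinarith [(ha n).2])
                  (mul_le_mul_of_nonneg_left hnum2 (by linarith [(ha n).2]))
                  (by positivity) hden
            _ = 4 / (1 - ‖z‖) * (1 - ‖a n‖) := by
                have hne : (1:ℝ) - ‖z‖ ≠ 0 := ne_of_gt hz1
                field_simp
                ring
        have hhalf : ‖f n - 1‖ ≤ 1/2 := by
          rw [← norm_neg, neg_sub]
          calc ‖1 - f n‖ ≤ 4 / (1 - ‖z‖) * (1 - ‖a n‖) := hsub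
            _ ≤ 4 / (1 - ‖z‖) * ((1 - ‖z‖)/16) := by gcongr
            _ = 1/4 := by
                rw [div_mul_div_comm, mul_comm (4:ℝ) (1 - ‖z‖),
                  mul_div_mul_left _ _ (ne_of_gt hz1)]
                norm_num
            _ ≤ 1/2 := by norm_num
        calc ‖Complex.log (f n)‖ = ‖Complex.log (1 + (f n - 1))‖ := by
              rw [show (1:ℂ) + (f n - 1) = f n by ring]
          _ ≤ 3/2 * ‖f n - 1‖ := Complex.norm_log_one_add_half_le_self hhalf
          _ = 3/2 * ‖1 - f n‖ := by rw [← norm_neg (f n - 1), neg_sub]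
          _ ≤ 3/2 * (4 / (1 - ‖z‖) * (1 - ‖a n‖)) :=
              mul_le_mul_of_nonneg_left hsub (by norm_num)
          _ = 6 / (1 - ‖z‖) * (1 - ‖a n‖) := by ring
      have hmult : Multipliable f :=
        Complex.multipliable_of_summable_log hlog
      rw [hB z, ← hf]
      exact hmult.hasProd
  -- limit of partial products
  have hBptend : Filter.Tendsto (fun N => ‖Bp N z‖) Filter.atTop (nhds ‖B z‖) := by
    have h6 : Filter.Tendsto (fun N => ∏ i ∈ Finset.range N, f i) Filter.atTop (nhds (B z)) :=
      hprod.tendsto_prod_nat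
    have h7 : (fun N => Bp N z) = fun N => ∏ i ∈ Finset.range N, f i := by
      funext N; rw [hBp]
    exact Filter.Tendsto.norm (h7 ▸ h6)
  -- partial sums tend to the LHS
  have htend1 : Filter.Tendsto (fun N => ∑ n ∈ Finset.range N, t n) Filter.atTop
      (nhds ((1 - ‖B z‖^2) / (1 - ‖z‖^2))) := by
    have h8 : Filter.Tendsto (fun N => (1 - ‖Bp N z‖^2) / (1 - ‖z‖^2)) Filter.atTop
        (nhds ((1 - ‖B z‖^2) / (1 - ‖z‖^2))) :=
      ((tendsto_const_nhds.sub (hBptend.pow 2)).div_const _)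
    exact Filter.Tendsto.congr (fun N => (partial_sum N).symm) h8
  -- summability of t
  have hts : Summable t := by
    apply summable_of_sum_range_le htnonneg (c := 1 / (1 - ‖z‖^2))
    intro N
    rw [partial_sum N]
    exact div_le_div₀ (by norm_num) (by nlinarith [sq_nonneg ‖Bp N z‖]) hz2 le_rfl
  have htend2 : Filter.Tendsto (fun N => ∑ n ∈ Finset.range N, t n) Filter.atTop
      (nhds (∑' n, t n)) := hts.hasSum.tendsto_sum_nat
  exact (tendsto_nhds_unique htend2 htend1).symm
end

section
/- Let $a \in (0,1)$, $d = 1 - a$, $\beta \in (0,1]$, $\rho = d^{\beta - 1}$, and $r_0 = \frac{a + a^{\rho}}{1 + a^{\rho+1}}$. Then $1 - r_0 \ge \frac{1}{4} d^{1+\beta}$. -/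
open Real

/-- With `d = 1 - a`, `ρ = d^(β-1)`, and `r₀ = (a + a^ρ)/(1 + a^(ρ+1))`,
one has `1 - r₀ ≥ (1/4) d^(1+β)`. -/
theorem one_sub_r_lower_bound (a β : ℝ) (ha0 : 0 < a) (ha1 : a < 1)
    (hβ0 : 0 < β) (hβ1 : β ≤ 1) :
    1 - (a + a ^ ((1 - a) ^ (β - 1))) / (1 + a ^ ((1 - a) ^ (β - 1) + 1))
      ≥ (1 / 4) * (1 - a) ^ (1 + β) := by
  set d : ℝ := 1 - a with hd
  have hd0 : 0 < d := by simp [hd]; linarith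
  have hd1 : d < 1 := by simp [hd]; linarith
  set ρ : ℝ := d ^ (β - 1) with hρ
  have hρ1 : 1 ≤ ρ :=
    Real.one_le_rpow_of_pos_of_le_one_of_nonpos hd0 hd1.le (by linarith)
  have hρd : ρ * d = d ^ β := by
    rw [hρ]
    rw [show d ^ (β - 1) * d = d ^ (β - 1) * d ^ (1:ℝ) by rw [Real.rpow_one],
      ← Real.rpow_add hd0]
    ring_nf
  have hdβ1 : d ^ β ≤ 1 := Real.rpow_le_one hd0.le hd1.le hβ0.le
  have hdβ0 : 0 < d ^ β := Real.rpow_pos_of_pos hd0 β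
  -- a ≤ 1/(1+d)
  have ha_le : a ≤ 1 / (1 + d) := by
    rw [le_div_iff₀ (by linarith)]
    have : a = 1 - d := by simp [hd]
    nlinarith [sq_nonneg d]
  -- Bernoulli
  have hbern : 1 + d ^ β ≤ (1 + d) ^ ρ := by
    have := one_add_mul_self_le_rpow_one_add (s := d) (by linarith) hρ1
    calc 1 + d ^ β = 1 + ρ * d := by rw [hρd]
      _ ≤ (1 + d) ^ ρ := this
  have hAle : a ^ ρ ≤ 1 / (1 + d ^ β) := by
    have h1 : a ^ ρ ≤ (1 / (1 + d)) ^ ρ :=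
      Real.rpow_le_rpow ha0.le ha_le (by linarith)
    have h2 : (1 / (1 + d)) ^ ρ = 1 / (1 + d) ^ ρ := by
      rw [Real.div_rpow zero_le_one (by linarith), Real.one_rpow]
    have h3 : 1 / (1 + d) ^ ρ ≤ 1 / (1 + d ^ β) :=
      one_div_le_one_div_of_le (by linarith) hbern
    linarith [h1, h2 ▸ h1]
  have hnum : d ^ β / 2 ≤ 1 - a ^ ρ := by
    have : 1 - 1 / (1 + d ^ β) = d ^ β / (1 + d ^ β) := by
      field_simp
      ring
    have h4 : d ^ β / (1 + d ^ β) ≥ d ^ β / 2 :=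
      div_le_div_of_nonneg_left hdβ0.le (by linarith) (by linarith)
    linarith
  have hA0 : 0 < a ^ ρ := Real.rpow_pos_of_pos ha0 ρ
  have hA1 : a ^ ρ ≤ 1 := Real.rpow_le_one ha0.le ha1.le (by linarith)
  have hB : a ^ (ρ + 1) = a ^ ρ * a := Real.rpow_add_one ha0.ne' ρ
  have hB0 : 0 < a ^ (ρ + 1) := Real.rpow_pos_of_pos ha0 _
  have hB1 : a ^ (ρ + 1) ≤ 1 := Real.rpow_le_one ha0.le ha1.le (by linarith)
  have key : 1 - (a + a ^ ρ) / (1 + a ^ (ρ + 1)) = d * (1 - a ^ ρ) / (1 + a ^ (ρ + 1)) := by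
    have hden : (0:ℝ) < 1 + a ^ ρ * a := by positivity
    rw [hB, hd]
    field_simp
    ring
  rw [key]
  have hdd : d ^ (1 + β) = d * d ^ β := by
    rw [Real.rpow_add hd0, Real.rpow_one]
  rw [hdd]
  have hnum' : d * (d ^ β / 2) ≤ d * (1 - a ^ ρ) :=
    mul_le_mul_of_nonneg_left hnum hd0.le
  have hstep : d * (d ^ β / 2) / 2 ≤ d * (1 - a ^ ρ) / (1 + a ^ (ρ + 1)) := by
    apply div_le_div₀ (mul_nonneg hd0.le (by linarith)) hnum' (by positivity) (by linarith)
  calc (1/4) * (d * d ^ β) = d * (d ^ β / 2) / 2 := by ring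
    _ ≤ d * (1 - a ^ ρ) / (1 + a ^ (ρ + 1)) := hstep
end
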